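/- Let d ≥ 1, γ > 0, Δ ≥ 0. Let f(x,ξ) be a stochastic function with f(x) := E_ξ[f(x,ξ)], let δ : ℝ^d → ℝ satisfy |δ(x)| ≤ Δ for all x, and set f_δ(x,ξ) := f(x,ξ) + δ(x). Let e be uniformly distributed on the unit l₁-sphere S₁^d(1), independent of ξ, define the two-point l₁-randomized gradient estimator g(x,ξ,e) := (d/(2γ))·(f_δ(x+γe,ξ) − f_δ(x−γe,ξ))·sign(e), and let ∇f_γ(x) := E_e[(d/γ)·f(x+γe)·sign(e)]. Then for every x ∈ ℝ^d and every r ∈ ℝ^d: E_{ξ,e}[⟨g(x,ξ,e), r⟩] ≥ ⟨∇f_γ(x), r⟩ − (d·Δ/γ)·E_e[|⟨sign(e), r⟩|]. -/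

import Mathlib

open MeasureTheory
open scoped ENNReal RealInnerProductSpace

noncomputable section

/-- The `l_p` norm on `EuclideanSpace ℝ (Fin d)` (with `p = ∞` giving the sup norm). -/
def lpNorm {d : ℕ} (p : ℝ≥0∞) (x : EuclideanSpace ℝ (Fin d)) : ℝ :=
  if p = ∞ then ⨆ i, |x i| else (∑ i, |x i| ^ p.toReal) ^ (1 / p.toReal)

/-- The unit `l₁`-ball `B₁^d(1)`. -/
def l1Ball (d : ℕ) : Set (EuclideanSpace ℝ (Fin d)) := {u | ∑ i, |u i| ≤ 1}

/-- The Euclidean unit ball `B₂^d(1)`. -/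
def l2Ball (d : ℕ) : Set (EuclideanSpace ℝ (Fin d)) := {u | ‖u‖ ≤ 1}

/-- The unit `l₁`-sphere `S₁^d(1)`. -/
def l1Sphere (d : ℕ) : Set (EuclideanSpace ℝ (Fin d)) := {u | ∑ i, |u i| = 1}

/-- The Euclidean unit sphere `S₂^d(1)`. -/
def l2Sphere (d : ℕ) : Set (EuclideanSpace ℝ (Fin d)) := {u | ‖u‖ = 1}

/-- Uniform probability distribution on a solid body: normalized Lebesgue measure. -/
def uniformOn {d : ℕ} (S : Set (EuclideanSpace ℝ (Fin d))) :
    Measure (EuclideanSpace ℝ (Fin d)) :=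
  (volume S)⁻¹ • volume.restrict S

/-- Uniform probability distribution on a hypersurface: normalized `(d-1)`-dimensional
Hausdorff measure. -/
def uniformOnSphere {d : ℕ} (S : Set (EuclideanSpace ℝ (Fin d))) :
    Measure (EuclideanSpace ℝ (Fin d)) :=
  (μH[(d : ℝ) - 1] S)⁻¹ • (μH[(d : ℝ) - 1]).restrict S

/-- Coordinatewise sign vector `sign(e)`. -/
def signVec {d : ℕ} (e : EuclideanSpace ℝ (Fin d)) : EuclideanSpace ℝ (Fin d) :=
  (WithLp.equiv 2 (Fin d → ℝ)).symm (fun i => Real.sign (e i))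

end

lemma measurable_realSign : Measurable Real.sign := by
  unfold Real.sign
  exact Measurable.ite (measurableSet_lt measurable_id measurable_const) measurable_const
    (Measurable.ite (measurableSet_lt measurable_const measurable_id) measurable_const
      measurable_const)

lemma measurable_signVec {d : ℕ} : Measurable (signVec (d := d)) := by
  apply (MeasurableEquiv.toLp 2 (Fin d → ℝ)).measurable.comp
  apply measurable_pi_lambda
  intro i
  exact measurable_realSign.comp ((measurable_pi_apply i).comp
    (MeasurableEquiv.toLp 2 (Fin d → ℝ)).symm.measurable)

lemma inner_signVec {d : ℕ} (e r : EuclideanSpace ℝ (Fin d)) :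
    ⟪signVec e, r⟫ = ∑ i, Real.sign (e i) * r i := by
  simp [signVec, PiLp.inner_apply, RCLike.inner_apply, WithLp.equiv]
  exact Finset.sum_congr rfl fun _ _ => mul_comm _ _

lemma abs_inner_signVec {d : ℕ} (e r : EuclideanSpace ℝ (Fin d)) :
    |⟪signVec e, r⟫| ≤ ∑ i, |r i| := by
  rw [inner_signVec]
  refine (Finset.abs_sum_le_sum_abs _ _).trans (Finset.sum_le_sum fun i _ => ?_)
  rw [abs_mul]
  rcases Real.sign_apply_eq (e i) with h | h | h <;> simp [h]

lemma signVec_neg {d : ℕ} (e : EuclideanSpace ℝ (Fin d)) : signVec (-e) = - signVec e := by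
  ext i
  simp [signVec, WithLp.equiv, Real.sign_neg]

lemma norm_signVec_le {d : ℕ} (e : EuclideanSpace ℝ (Fin d)) :
    ‖signVec e‖ ≤ Real.sqrt d := by
  rw [EuclideanSpace.norm_eq]
  apply Real.sqrt_le_sqrt
  calc ∑ i, ‖signVec e i‖ ^ 2 ≤ ∑ _i : Fin d, 1 := by
        refine Finset.sum_le_sum fun i _ => ?_
        have : signVec e i = Real.sign (e i) := rfl
        rw [this]
        rcases Real.sign_apply_eq (e i) with h | h | h <;> simp [h]
    _ = d := by simp

lemma measurableSet_l1Sphere {d : ℕ} : MeasurableSet (l1Sphere d) := by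
  have : Continuous fun u : EuclideanSpace ℝ (Fin d) => ∑ i, |u i| :=
    continuous_finset_sum _ fun i _ => (EuclideanSpace.proj i).continuous.abs
  exact this.measurable (measurableSet_singleton 1)

instance instFinUOS {d : ℕ} : IsFiniteMeasure (uniformOnSphere (l1Sphere d)) := by
  constructor
  rw [uniformOnSphere]
  simp only [Measure.smul_apply, Measure.restrict_apply MeasurableSet.univ, Set.univ_inter,
    smul_eq_mul]
  exact lt_of_le_of_lt (ENNReal.inv_mul_le_one _) ENNReal.one_lt_top

lemma map_neg_uniformOnSphere {d : ℕ} :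
    Measure.map (fun e => -e) (uniformOnSphere (l1Sphere d)) = uniformOnSphere (l1Sphere d) := by
  have hneg : (fun e : EuclideanSpace ℝ (Fin d) => -e) = (LinearIsometryEquiv.neg ℝ) := rfl
  have hiso : Isometry (fun e : EuclideanSpace ℝ (Fin d) => -e) := by
    rw [hneg]; exact (LinearIsometryEquiv.neg ℝ).isometry
  have hsurj : Function.Surjective (fun e : EuclideanSpace ℝ (Fin d) => -e) :=
    fun y => ⟨-y, by simp⟩
  have hmap : Measure.map (fun e : EuclideanSpace ℝ (Fin d) => -e)
      (μH[(d : ℝ) - 1] : Measure (EuclideanSpace ℝ (Fin d))) = μH[(d : ℝ) - 1] := by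
    rw [hiso.map_hausdorffMeasure (Or.inr hsurj), hsurj.range_eq, Measure.restrict_univ]
  have hpre : (fun e : EuclideanSpace ℝ (Fin d) => -e) ⁻¹' l1Sphere d = l1Sphere d := by
    ext u; simp [l1Sphere]
  rw [uniformOnSphere, Measure.map_smul]
  rw [← hpre, ← Measure.restrict_map measurable_neg measurableSet_l1Sphere, hmap, hpre]

lemma integral_comp_neg_uniformOnSphere {d : ℕ} (G : EuclideanSpace ℝ (Fin d) → ℝ) :
    ∫ e, G (-e) ∂(uniformOnSphere (l1Sphere d)) = ∫ e, G e ∂(uniformOnSphere (l1Sphere d)) := by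
  conv_rhs => rw [← map_neg_uniformOnSphere]
  have : Measure.map (fun e : EuclideanSpace ℝ (Fin d) => -e) (uniformOnSphere (l1Sphere d)) =
      Measure.map ((Homeomorph.neg (EuclideanSpace ℝ (Fin d))).toMeasurableEquiv)
        (uniformOnSphere (l1Sphere d)) := rfl
  rw [this, MeasureTheory.integral_map_equiv]
  rfl

/-- Bias bound for the two-point `l₁`-randomized gradient estimator:
`E_{ξ,e}[⟨g(x,ξ,e), r⟩] ≥ ⟨∇f_γ(x), r⟩ − (dΔ/γ)·E_e[|⟨sign(e), r⟩|]`, where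
`g(x,ξ,e) = (d/(2γ))·(f_δ(x+γe,ξ) − f_δ(x−γe,ξ))·sign(e)` and
`∇f_γ(x) = E_e[(d/γ)·f(x+γe)·sign(e)]`, `e` uniform on the unit `l₁`-sphere. -/
theorem two_point_l1_bias {d : ℕ} (hd : 1 ≤ d) (γ Δ : ℝ) (hγ : 0 < γ) (hΔ : 0 ≤ Δ)
    {Ω : Type*} [MeasurableSpace Ω] (μξ : Measure Ω) [IsProbabilityMeasure μξ]
    (f : EuclideanSpace ℝ (Fin d) → Ω → ℝ) (F : EuclideanSpace ℝ (Fin d) → ℝ)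
    (hF : ∀ y, F y = ∫ ω, f y ω ∂μξ)
    (hfm : Measurable (Function.uncurry f))
    (δ : EuclideanSpace ℝ (Fin d) → ℝ) (hδm : Measurable δ)
    (hδ : ∀ y : EuclideanSpace ℝ (Fin d), |δ y| ≤ Δ)
    (x r : EuclideanSpace ℝ (Fin d))
    (hint1 : Integrable (fun z : Ω × EuclideanSpace ℝ (Fin d) => f (x + γ • z.2) z.1)
      (μξ.prod (uniformOnSphere (l1Sphere d))))
    (hint2 : Integrable (fun z : Ω × EuclideanSpace ℝ (Fin d) => f (x - γ • z.2) z.1)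
      (μξ.prod (uniformOnSphere (l1Sphere d)))) :
    ∫ z : Ω × EuclideanSpace ℝ (Fin d),
        ⟪(d / (2 * γ) * ((f (x + γ • z.2) z.1 + δ (x + γ • z.2)) -
            (f (x - γ • z.2) z.1 + δ (x - γ • z.2)))) • signVec z.2, r⟫
        ∂(μξ.prod (uniformOnSphere (l1Sphere d)))
      ≥ ⟪∫ e, (d / γ * F (x + γ • e)) • signVec e ∂(uniformOnSphere (l1Sphere d)), r⟫
          - d * Δ / γ * ∫ e, |⟪signVec e, r⟫| ∂(uniformOnSphere (l1Sphere d)) := by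
  classical
  set ν : Measure (EuclideanSpace ℝ (Fin d)) := uniformOnSphere (l1Sphere d) with hνdef
  haveI : IsFiniteMeasure ν := instFinUOS
  set R : EuclideanSpace ℝ (Fin d) → ℝ := fun e => ⟪signVec e, r⟫ with hRdef
  set B : ℝ := ∑ i, |r i| with hBdef
  have hRm : Measurable R := by
    rw [hRdef]; exact measurable_signVec.inner measurable_const
  have hRb : ∀ e, ‖R e‖ ≤ B := fun e => by
    simp only [hRdef, hBdef, Real.norm_eq_abs]; exact abs_inner_signVec e r
  have hRneg : ∀ e, R (-e) = - R e := fun e => by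
    simp only [hRdef]; rw [signVec_neg, inner_neg_left]
  -- measurability of basic maps
  have hmapp : Measurable fun e : EuclideanSpace ℝ (Fin d) => x + γ • e :=
    measurable_const.add (measurable_id.const_smul γ)
  have hmapm : Measurable fun e : EuclideanSpace ℝ (Fin d) => x - γ • e :=
    measurable_const.sub (measurable_id.const_smul γ)
  have hmp : Measurable fun z : Ω × EuclideanSpace ℝ (Fin d) => f (x + γ • z.2) z.1 :=
    hfm.comp ((hmapp.comp measurable_snd).prodMk measurable_fst)
  have hmm : Measurable fun z : Ω × EuclideanSpace ℝ (Fin d) => f (x - γ • z.2) z.1 :=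
    hfm.comp ((hmapm.comp measurable_snd).prodMk measurable_fst)
  -- integrability of the R-weighted stochastic terms
  have key : ∀ h : Ω × EuclideanSpace ℝ (Fin d) → ℝ, Integrable h (μξ.prod ν) →
      Integrable (fun z => R z.2 * h z) (μξ.prod ν) := fun h hh =>
    hh.bdd_mul (hRm.comp measurable_snd).aestronglyMeasurable (Filter.Eventually.of_forall fun z => hRb z.2)
  have hI1 : Integrable (fun z : Ω × EuclideanSpace ℝ (Fin d) =>
      R z.2 * f (x + γ • z.2) z.1) (μξ.prod ν) := key _ hint1
  have hI2 : Integrable (fun z : Ω × EuclideanSpace ℝ (Fin d) =>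
      R z.2 * f (x - γ • z.2) z.1) (μξ.prod ν) := key _ hint2
  set g1 : Ω × EuclideanSpace ℝ (Fin d) → ℝ := fun z =>
    (d / (2 * γ)) * (R z.2 * f (x + γ • z.2) z.1 - R z.2 * f (x - γ • z.2) z.1) with hg1def
  set g2 : Ω × EuclideanSpace ℝ (Fin d) → ℝ := fun z =>
    (d / (2 * γ)) * (R z.2 * (δ (x + γ • z.2) - δ (x - γ • z.2))) with hg2def
  have hg1 : Integrable g1 (μξ.prod ν) := ((hI1.sub hI2).const_mul _)
  have hg2m : Measurable g2 := by
    rw [hg2def]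
    exact (((hRm.comp measurable_snd).mul
      (((hδm.comp hmapp).comp measurable_snd).sub
        ((hδm.comp hmapm).comp measurable_snd)))).const_mul _
  have hδdiff : ∀ e : EuclideanSpace ℝ (Fin d),
      |δ (x + γ • e) - δ (x - γ • e)| ≤ 2 * Δ := fun e => by
    calc |δ (x + γ • e) - δ (x - γ • e)| ≤ |δ (x + γ • e)| + |δ (x - γ • e)| := abs_sub _ _
      _ ≤ 2 * Δ := by have := hδ (x + γ • e); have := hδ (x - γ • e); linarith
  have hBnn : 0 ≤ B := by
    rw [hBdef]; positivity
  have hg2bd : ∀ z : Ω × EuclideanSpace ℝ (Fin d),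
      ‖g2 z‖ ≤ (d / (2 * γ)) * (B * (2 * Δ)) := fun z => by
    simp only [hg2def, Real.norm_eq_abs, abs_mul]
    rw [abs_of_nonneg (show (0:ℝ) ≤ (d : ℝ) / (2 * γ) by positivity)]
    gcongr
    · exact hRb z.2
    · exact hδdiff z.2
  have hg2 : Integrable g2 (μξ.prod ν) :=
    (integrable_const ((d / (2 * γ)) * (B * (2 * Δ)))).mono'
      hg2m.aestronglyMeasurable (Filter.Eventually.of_forall hg2bd)
  -- pointwise identity
  have hpt : ∀ z : Ω × EuclideanSpace ℝ (Fin d),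
      ⟪((d : ℝ) / (2 * γ) * ((f (x + γ • z.2) z.1 + δ (x + γ • z.2)) -
          (f (x - γ • z.2) z.1 + δ (x - γ • z.2)))) • signVec z.2, r⟫ = g1 z + g2 z := fun z => by
    rw [real_inner_smul_left]
    simp only [hg1def, hg2def, hRdef]
    ring
  have hsplit : (∫ z : Ω × EuclideanSpace ℝ (Fin d),
      ⟪((d : ℝ) / (2 * γ) * ((f (x + γ • z.2) z.1 + δ (x + γ • z.2)) -
          (f (x - γ • z.2) z.1 + δ (x - γ • z.2)))) • signVec z.2, r⟫ ∂(μξ.prod ν))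
      = (∫ z, g1 z ∂(μξ.prod ν)) + ∫ z, g2 z ∂(μξ.prod ν) := by
    rw [integral_congr_ae (Filter.Eventually.of_forall hpt)]
    exact integral_add hg1 hg2
  -- compute the g1 integral
  have hg1eq : ∫ z, g1 z ∂(μξ.prod ν)
      = ∫ e, (d / (2 * γ)) * (R e * F (x + γ • e) - R e * F (x - γ • e)) ∂ν := by
    rw [integral_prod_symm _ hg1]
    refine integral_congr_ae ?_
    filter_upwards [hint1.prod_left_ae, hint2.prod_left_ae] with e h1 h2
    rw [hF, hF]
    simp only [hg1def]
    rw [integral_const_mul, integral_sub (h1.const_mul _) (h2.const_mul _),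
      integral_const_mul, integral_const_mul]
  have hFplus : Integrable (fun e => F (x + γ • e)) ν := by
    have := hint1.integral_prod_right
    simpa only [← hF] using this
  have hFminus : Integrable (fun e => F (x - γ • e)) ν := by
    have := hint2.integral_prod_right
    simpa only [← hF] using this
  have hFRplus : Integrable (fun e => R e * F (x + γ • e)) ν :=
    hFplus.bdd_mul hRm.aestronglyMeasurable (Filter.Eventually.of_forall fun e => hRb e)
  have hFRminus : Integrable (fun e => R e * F (x - γ • e)) ν :=
    hFminus.bdd_mul hRm.aestronglyMeasurable (Filter.Eventually.of_forall fun e => hRb e)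
  have hsym : ∫ e, R e * F (x - γ • e) ∂ν = - ∫ e, R e * F (x + γ • e) ∂ν := by
    have h1 := integral_comp_neg_uniformOnSphere (fun e => R e * F (x - γ • e))
    rw [hνdef, ← h1]
    have heq : (fun e : EuclideanSpace ℝ (Fin d) => R (-e) * F (x - γ • (-e)))
        = fun e => -(R e * F (x + γ • e)) := by
      funext e
      rw [hRneg, smul_neg, sub_neg_eq_add]
      ring
    rw [show (fun e : EuclideanSpace ℝ (Fin d) =>
        (fun e => R e * F (x - γ • e)) (-e)) = fun e => -(R e * F (x + γ • e)) from heq]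
    rw [integral_neg]
  have hg1val : ∫ z, g1 z ∂(μξ.prod ν) = (d / γ) * ∫ e, R e * F (x + γ • e) ∂ν := by
    rw [hg1eq, integral_const_mul, integral_sub hFRplus hFRminus, hsym]
    field_simp
    ring
  -- identify the first RHS term
  have hGint : Integrable (fun e => ((d : ℝ) / γ * F (x + γ • e)) • signVec e) ν := by
    refine Integrable.mono' (((hFplus.const_mul ((d : ℝ) / γ)).abs.const_mul (Real.sqrt d)))
      ((hFplus.aestronglyMeasurable.const_mul _).smul
        measurable_signVec.aestronglyMeasurable)
      (Filter.Eventually.of_forall fun e => ?_)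
    rw [norm_smul]
    calc ‖(d : ℝ) / γ * F (x + γ • e)‖ * ‖signVec e‖
        ≤ ‖(d : ℝ) / γ * F (x + γ • e)‖ * Real.sqrt d := by
          gcongr; exact norm_signVec_le e
      _ = Real.sqrt d * |(d : ℝ) / γ * F (x + γ • e)| := by
          rw [Real.norm_eq_abs]; ring
  have hinner : ⟪∫ e, ((d : ℝ) / γ * F (x + γ • e)) • signVec e ∂ν, r⟫
      = (d / γ) * ∫ e, R e * F (x + γ • e) ∂ν := by
    rw [real_inner_comm, ← integral_inner hGint r, ← integral_const_mul]
    refine integral_congr_ae (Filter.Eventually.of_forall fun e => ?_)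
    simp only [real_inner_smul_right, real_inner_comm, hRdef]
    ring
  -- bound the g2 integral
  have hg2eq : ∫ z, g2 z ∂(μξ.prod ν)
      = ∫ e, (d / (2 * γ)) * (R e * (δ (x + γ • e) - δ (x - γ • e))) ∂ν := by
    rw [integral_prod_symm _ hg2]
    refine integral_congr_ae (Filter.Eventually.of_forall fun e => ?_)
    simp only [hg2def]
    rw [integral_const]
    simp
  have habsR : Integrable (fun e => |R e|) ν :=
    (integrable_const B).mono' hRm.abs.aestronglyMeasurable
      (Filter.Eventually.of_forall fun e => by rw [Real.norm_eq_abs, abs_abs]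
                                               exact (Real.norm_eq_abs (R e)) ▸ hRb e)
  have hIg2' : Integrable (fun e => (d / (2 * γ)) * (R e * (δ (x + γ • e) - δ (x - γ • e)))) ν := by
    refine (integrable_const ((d / (2 * γ)) * (B * (2 * Δ)))).mono'
      ((hRm.mul ((hδm.comp hmapp).sub (hδm.comp hmapm))).const_mul _).aestronglyMeasurable
      (Filter.Eventually.of_forall fun e => ?_)
    simp only [Real.norm_eq_abs, abs_mul]
    rw [abs_of_nonneg (show (0:ℝ) ≤ (d : ℝ) / (2 * γ) by positivity)]
    gcongr
    · exact hRb e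
    · exact hδdiff e
  have habs2 : ∀ e : EuclideanSpace ℝ (Fin d),
      -((d : ℝ) * Δ / γ * |R e|) ≤ (d / (2 * γ)) * (R e * (δ (x + γ • e) - δ (x - γ • e))) := by
    intro e
    have h1 : |(d / (2 * γ)) * (R e * (δ (x + γ • e) - δ (x - γ • e)))| ≤ (d : ℝ) * Δ / γ * |R e| := by
      rw [abs_mul, abs_mul, abs_of_nonneg (show (0:ℝ) ≤ (d : ℝ) / (2 * γ) by positivity)]
      calc (d : ℝ) / (2 * γ) * (|R e| * |δ (x + γ • e) - δ (x - γ • e)|)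
          ≤ (d : ℝ) / (2 * γ) * (|R e| * (2 * Δ)) := by gcongr; exact hδdiff e
        _ = (d : ℝ) * Δ / γ * |R e| := by field_simp
    linarith [neg_abs_le ((d / (2 * γ)) * (R e * (δ (x + γ • e) - δ (x - γ • e))))]
  have hg2ge : ∫ z, g2 z ∂(μξ.prod ν) ≥ -((d : ℝ) * Δ / γ * ∫ e, |R e| ∂ν) := by
    rw [hg2eq]
    have := integral_mono ((habsR.const_mul ((d : ℝ) * Δ / γ)).neg) hIg2' habs2
    simp only [Pi.neg_apply] at this
    rwa [integral_neg, integral_const_mul] at this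
  have hRfin : ∫ e, |⟪signVec e, r⟫| ∂ν = ∫ e, |R e| ∂ν := by
    simp only [hRdef]
  rw [ge_iff_le, hRfin, hsplit, hg1val, hinner]
  linarith [hg2ge]
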